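/- Let λ₂ > 0 and let F_X be the distribution function of an Exp(α) random variable. Then the unique bounded solution ψ₀ : [0,∞) → ℝ with lim_{u→∞} ψ₀(u) = 0 of the integral equation (1 + λ₂)ψ₀(u) = λ₂ ∫_0^u ψ₀(u−y) α e^{−αy} dy + λ₂ e^{−αu} is ψ₀(u) = (λ₂/(1+λ₂)) e^{−αu/(1+λ₂)}. In particular ψ₀(0) = λ₂/(λ₂+1). -/

import Mathlib

open MeasureTheory intervalIntegral Filter

lemma exp_lin_integral (c : ℝ) (hc : c ≠ 0) (u : ℝ) :
    ∫ y in (0:ℝ)..u, Real.exp (c * y) = (Real.exp (c * u) - 1) / c := by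
  have h : ∀ y ∈ Set.uIcc (0:ℝ) u,
      HasDerivAt (fun y => Real.exp (c * y) / c) (Real.exp (c * y)) y := by
    intro y _
    have := ((Real.hasDerivAt_exp (c * y)).comp y ((hasDerivAt_id y).const_mul c))
    simpa [mul_comm, div_mul_cancel₀, hc] using this.div_const c
  rw [intervalIntegral.integral_eq_sub_of_hasDerivAt h
    (by apply Continuous.intervalIntegrable; continuity)]
  rw [mul_zero, Real.exp_zero]; ring

theorem stmt16 (lam₂ α : ℝ) (hlam₂ : 0 < lam₂) (hα : 0 < α) :
    let ψ₀ : ℝ → ℝ := fun u => lam₂ / (1 + lam₂) * Real.exp (-α * u / (1 + lam₂))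
    (∀ u ≥ (0 : ℝ),
        (1 + lam₂) * ψ₀ u
          = lam₂ * (∫ y in (0:ℝ)..u, ψ₀ (u - y) * (α * Real.exp (-α * y)))
              + lam₂ * Real.exp (-α * u)) ∧
    Tendsto ψ₀ atTop (nhds 0) ∧
    (∀ ψ : ℝ → ℝ, Continuous ψ → (∃ M : ℝ, ∀ u ≥ (0 : ℝ), |ψ u| ≤ M) →
      Tendsto ψ atTop (nhds 0) →
      (∀ u ≥ (0 : ℝ),
        (1 + lam₂) * ψ u
          = lam₂ * (∫ y in (0:ℝ)..u, ψ (u - y) * (α * Real.exp (-α * y)))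
              + lam₂ * Real.exp (-α * u)) →
      ∀ u ≥ (0 : ℝ), ψ u = ψ₀ u) ∧
    ψ₀ 0 = lam₂ / (lam₂ + 1) := by
  intro ψ₀
  have h1 : (0:ℝ) < 1 + lam₂ := by linarith
  have h1' : (1:ℝ) + lam₂ ≠ 0 := ne_of_gt h1
  set c : ℝ := α / (1 + lam₂) - α with hc
  have hcneg : c < 0 := by
    rw [hc]
    have : α / (1 + lam₂) < α := by
      rw [div_lt_iff₀ h1]; nlinarith
    linarith
  have hcne : c ≠ 0 := ne_of_lt hcneg
  have hψ₀c : Continuous ψ₀ := by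
    simp only [ψ₀]; fun_prop
  -- the integral equation for ψ₀
  have heq : ∀ u ≥ (0 : ℝ),
      (1 + lam₂) * ψ₀ u
        = lam₂ * (∫ y in (0:ℝ)..u, ψ₀ (u - y) * (α * Real.exp (-α * y)))
            + lam₂ * Real.exp (-α * u) := by
    intro u _
    have hint : ∀ y : ℝ, ψ₀ (u - y) * (α * Real.exp (-α * y))
        = (lam₂ / (1 + lam₂) * α * Real.exp (-α * u / (1 + lam₂))) * Real.exp (c * y) := by
      intro y
      simp only [ψ₀]
      rw [show (lam₂ / (1 + lam₂) * α * Real.exp (-α * u / (1 + lam₂))) * Real.exp (c * y)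
          = lam₂ / (1 + lam₂) * α * (Real.exp (-α * u / (1 + lam₂)) * Real.exp (c * y)) by ring,
        ← Real.exp_add]
      rw [show lam₂ / (1 + lam₂) * Real.exp (-α * (u - y) / (1 + lam₂)) * (α * Real.exp (-α * y))
          = lam₂ / (1 + lam₂) * α * (Real.exp (-α * (u - y) / (1 + lam₂)) * Real.exp (-α * y)) by
            ring, ← Real.exp_add]
      congr 1
      rw [hc]; ring
    have hI : (∫ y in (0:ℝ)..u, ψ₀ (u - y) * (α * Real.exp (-α * y)))
        = (lam₂ / (1 + lam₂) * α * Real.exp (-α * u / (1 + lam₂))) * ((Real.exp (c * u) - 1) / c) := by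
      simp only [hint]
      rw [intervalIntegral.integral_const_mul, exp_lin_integral c hcne]
    rw [hI]
    have hEF : Real.exp (c * u) * Real.exp (-α * u / (1 + lam₂)) = Real.exp (-α * u) := by
      rw [← Real.exp_add]; congr 1; rw [hc]; ring
    rw [← hEF]
    simp only [ψ₀]
    have h7 : lam₂ / (1 + lam₂) * α = -c := by rw [hc]; field_simp; ring
    rw [h7]
    have h8 : -c * Real.exp (-α * u / (1 + lam₂)) * ((Real.exp (c * u) - 1) / c)
        = (1 - Real.exp (c * u)) * Real.exp (-α * u / (1 + lam₂)) := by
      field_simp; ring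
    rw [h8]
    field_simp
    ring
  refine ⟨heq, ?_, ?_, ?_⟩
  · -- tendsto
    have h2 : Tendsto (fun u : ℝ => (-α / (1 + lam₂)) * u) atTop atBot := by
      apply Tendsto.const_mul_atTop_of_neg _ tendsto_id
      exact div_neg_of_neg_of_pos (by linarith) h1
    have h3 := Real.tendsto_exp_atBot.comp h2
    have h4 : ψ₀ = fun u => lam₂ / (1 + lam₂) * Real.exp ((-α / (1 + lam₂)) * u) := by
      funext u; simp only [ψ₀]; congr 1; ring
    rw [h4]
    simpa using h3.const_mul (lam₂ / (1 + lam₂))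
  · -- uniqueness
    intro ψ hψc _ _ hψeq u₀ hu₀
    set φ : ℝ → ℝ := fun u => ψ u - ψ₀ u with hφ
    have hφc : Continuous φ := hψc.sub hψ₀c
    have hhom : ∀ u ≥ (0:ℝ), (1 + lam₂) * φ u
        = lam₂ * ∫ y in (0:ℝ)..u, φ (u - y) * (α * Real.exp (-α * y)) := by
      intro u hu
      have i1 : IntervalIntegrable (fun y => ψ (u - y) * (α * Real.exp (-α * y)))
          volume 0 u := by
        apply Continuous.intervalIntegrable
        exact (hψc.comp (continuous_const.sub continuous_id)).mul (by fun_prop)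
      have i2 : IntervalIntegrable (fun y => ψ₀ (u - y) * (α * Real.exp (-α * y)))
          volume 0 u := by
        apply Continuous.intervalIntegrable
        exact (hψ₀c.comp (continuous_const.sub continuous_id)).mul (by fun_prop)
      have e1 := hψeq u hu
      have e2 := heq u hu
      simp only [hφ, sub_mul, mul_sub]
      rw [intervalIntegral.integral_sub i1 i2]
      rw [mul_sub]
      linarith
    obtain ⟨x₀, hx₀mem, hx₀max⟩ := (isCompact_Icc (a := (0:ℝ)) (b := u₀)).exists_isMaxOn
      (Set.nonempty_Icc.mpr hu₀) (hφc.abs.continuousOn)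
    set S := |φ x₀| with hS
    have hSnn : 0 ≤ S := abs_nonneg _
    have hx0 : (0:ℝ) ≤ x₀ := hx₀mem.1
    have iabs : IntervalIntegrable (fun y => |φ (x₀ - y) * (α * Real.exp (-α * y))|)
        volume 0 x₀ := by
      apply Continuous.intervalIntegrable
      exact ((hφc.comp (continuous_const.sub continuous_id)).mul (by fun_prop)).abs
    have iS : IntervalIntegrable (fun y => S * (α * Real.exp (-α * y))) volume 0 x₀ := by
      apply Continuous.intervalIntegrable; fun_prop
    have hIle : |∫ y in (0:ℝ)..x₀, φ (x₀ - y) * (α * Real.exp (-α * y))| ≤ S := by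
      calc |∫ y in (0:ℝ)..x₀, φ (x₀ - y) * (α * Real.exp (-α * y))|
          ≤ ∫ y in (0:ℝ)..x₀, |φ (x₀ - y) * (α * Real.exp (-α * y))| :=
            intervalIntegral.abs_integral_le_integral_abs hx0
        _ ≤ ∫ y in (0:ℝ)..x₀, S * (α * Real.exp (-α * y)) := by
            apply intervalIntegral.integral_mono_on hx0 iabs iS
            intro y hy
            rw [abs_mul]
            have hmem : x₀ - y ∈ Set.Icc (0:ℝ) u₀ :=
              ⟨by linarith [hy.2], by linarith [hy.1, hx₀mem.2]⟩
            have h5 : |φ (x₀ - y)| ≤ S := hx₀max hmem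
            have h6 : |α * Real.exp (-α * y)| = α * Real.exp (-α * y) := by
              rw [abs_of_pos]; positivity
            rw [h6]
            exact mul_le_mul_of_nonneg_right h5 (by positivity)
        _ = S * ∫ y in (0:ℝ)..x₀, α * Real.exp (-α * y) := intervalIntegral.integral_const_mul _ _
        _ ≤ S * 1 := by
            apply mul_le_mul_of_nonneg_left _ hSnn
            have : (∫ y in (0:ℝ)..x₀, α * Real.exp (-α * y))
                = α * ((Real.exp (-α * x₀) - 1) / (-α)) := by
              rw [intervalIntegral.integral_const_mul, exp_lin_integral (-α) (by linarith) x₀]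
            rw [this]
            have hexp : 0 < Real.exp (-α * x₀) := Real.exp_pos _
            have h9 : α * ((Real.exp (-α * x₀) - 1) / -α) = 1 - Real.exp (-α * x₀) := by
              rw [div_neg, mul_neg, mul_comm, div_mul_cancel₀ _ hα.ne']; ring
            rw [h9]
            linarith
        _ = S := mul_one S
    have key : (1 + lam₂) * S ≤ lam₂ * S := by
      calc (1 + lam₂) * S = |(1 + lam₂) * φ x₀| := by
            rw [abs_mul, abs_of_pos h1]
        _ = |lam₂ * ∫ y in (0:ℝ)..x₀, φ (x₀ - y) * (α * Real.exp (-α * y))| := by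
            rw [hhom x₀ hx0]
        _ = lam₂ * |∫ y in (0:ℝ)..x₀, φ (x₀ - y) * (α * Real.exp (-α * y))| := by
            rw [abs_mul, abs_of_pos hlam₂]
        _ ≤ lam₂ * S := mul_le_mul_of_nonneg_left hIle hlam₂.le
    have hS0 : S = 0 := by nlinarith
    have : |φ u₀| ≤ S := hx₀max ⟨hu₀, le_refl u₀⟩
    have : φ u₀ = 0 := by
      rw [← abs_eq_zero]
      linarith [abs_nonneg (φ u₀)]
    have := sub_eq_zero.mp this
    exact this
  · simp only [ψ₀, mul_zero, zero_div, Real.exp_zero, mul_one, add_comm]
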